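/- Let N be a manifold, η ∈ Ω³(N) a closed 3-form, and 𝔨 a quadratic Lie algebra. Then the bundle (TN ⊕ T*N) ⊕ 𝔨_N with anchor the projection to TN, pairing ⟨X₁+α₁+w₁, X₂+α₂+w₂⟩ = i_{X₂}α₁ + i_{X₁}α₂ + ⟨w₁,w₂⟩, and bracket ⟦X₁+α₁+w₁, X₂+α₂+w₂⟧ = [X₁,X₂] + (ℒ_{X₁}α₂ − i_{X₂}dα₁ + i_{X₂}i_{X₁}η + ⟨dw₁, w₂⟩) + (ℒ_{X₁}w₂ − ℒ_{X₂}w₁ + [w₁,w₂]) is a Courant algebroid. -/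
import Mathlib


set_option maxHeartbeats 1600000 in
/-- The product 𝕋_η N × 𝔨 of the η-twisted standard Courant
algebroid with a quadratic Lie algebra 𝔨 is a Courant algebroid.  Geometry is
presented algebraically: R is the algebra of functions, V the Lie algebra of
vector fields acting on R by derivations (`act`), 1-forms are functions
V → R (with `islin` singling out the R-linear ones), K is the module of
𝔨-valued functions with Lie derivative LK and pointwise pairing PK, and η is a
closed 3-form.  The conclusion lists the five Courant algebroid axioms and
nondegeneracy of the pairing for the bundle E = V × (V → R) × K with the
bracket (prodcour) and pairing (prodpair). -/
theorem stmt13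
    (R : Type) [CommRing R] [Algebra ℝ R] [Nontrivial R]
    (V : Type) [LieRing V] [Module R V]
    (act : V → R → R)
    (hactadd : ∀ X Y f, act (X + Y) f = act X f + act Y f)
    (hactsmul : ∀ (f : R) X g, act (f • X) g = f * act X g)
    (hactadd' : ∀ X f g, act X (f + g) = act X f + act X g)
    (hactLeib : ∀ X f g, act X (f * g) = f * act X g + g * act X f)
    (hactbr : ∀ (X Y : V) (f : R), act ⁅X, Y⁆ f = act X (act Y f) - act Y (act X f))
    (hVmod : ∀ (X : V) (f : R) (Y : V), ⁅X, f • Y⁆ = f • ⁅X, Y⁆ + (act X f) • Y)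
    (K : Type) [LieRing K] [Module R K]
    (hKbr : ∀ (f : R) (w w' : K), ⁅f • w, w'⁆ = f • ⁅w, w'⁆)
    (LK : V → K → K)
    (hLKadd : ∀ X w w', LK X (w + w') = LK X w + LK X w')
    (hLKadd2 : ∀ X Y w, LK (X + Y) w = LK X w + LK Y w)
    (hLKf : ∀ (X : V) (f : R) (w : K), LK X (f • w) = f • LK X w + (act X f) • w)
    (hLKten : ∀ (f : R) (X : V) (w : K), LK (f • X) w = f • LK X w)
    (hLKbr : ∀ (X : V) (w w' : K), LK X ⁅w, w'⁆ = ⁅LK X w, w'⁆ + ⁅w, LK X w'⁆)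
    (hLKcomm : ∀ (X Y : V) (w : K), LK ⁅X, Y⁆ w = LK X (LK Y w) - LK Y (LK X w))
    (PK : K → K → R)
    (hPKsymm : ∀ w w', PK w w' = PK w' w)
    (hPKadd : ∀ w w₁ w₂, PK w (w₁ + w₂) = PK w w₁ + PK w w₂)
    (hPKsmul : ∀ (f : R) w w', PK (f • w) w' = f * PK w w')
    (hPKnd : ∀ w, (∀ w', PK w w' = 0) → w = 0)
    (hPKinv : ∀ w w₁ w₂ : K, PK ⁅w, w₁⁆ w₂ + PK w₁ ⁅w, w₂⁆ = 0)
    (hPKL : ∀ X w w', act X (PK w w') = PK (LK X w) w' + PK w (LK X w'))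
    (η : V → V → V → R)
    (hηalt1 : ∀ X Y Z, η X Y Z = - η Y X Z)
    (hηalt2 : ∀ X Y Z, η X Y Z = - η X Z Y)
    (hηadd : ∀ X X' Y Z, η (X + X') Y Z = η X Y Z + η X' Y Z)
    (hηsmul : ∀ (f : R) X Y Z, η (f • X) Y Z = f * η X Y Z)
    (hηclosed : ∀ X Y Z W,
      act X (η Y Z W) - act Y (η X Z W) + act Z (η X Y W) - act W (η X Y Z)
        - η ⁅X, Y⁆ Z W + η ⁅X, Z⁆ Y W - η ⁅X, W⁆ Y Z
        - η ⁅Y, Z⁆ X W + η ⁅Y, W⁆ X Z - η ⁅Z, W⁆ X Y = 0) :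
    -- the Courant algebroid E = 𝕋_η N × 𝔨
    let E := V × (V → R) × K
    let anc : E → V := fun e => e.1
    let P : E → E → R := fun e e' => e.2.1 e'.1 + e'.2.1 e.1 + PK e.2.2 e'.2.2
    let br : E → E → E := fun e e' =>
      (⁅e.1, e'.1⁆,
       fun Z => (act e.1 (e'.2.1 Z) - e'.2.1 ⁅e.1, Z⁆)
         - (act e'.1 (e.2.1 Z) - act Z (e.2.1 e'.1) - e.2.1 ⁅e'.1, Z⁆)
         + η e.1 e'.1 Z + PK (LK Z e.2.2) e'.2.2,
       LK e.1 e'.2.2 - LK e'.1 e.2.2 + ⁅e.2.2, e'.2.2⁆)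
    let smulE : R → E → E := fun f e => (f • e.1, fun Z => f * e.2.1 Z, f • e.2.2)
    let Dop : R → E := fun f => (0, fun Z => act Z f, 0)
    let islin : (V → R) → Prop := fun α =>
      (∀ X Y, α (X + Y) = α X + α Y) ∧ ∀ (f : R) (X : V), α (f • X) = f * α X
    -- Leibniz rule
    (∀ (f : R) (e₁ e₂ : E), islin e₁.2.1 → islin e₂.2.1 →
        br e₁ (smulE f e₂) = smulE f (br e₁ e₂) + smulE (act e₁.1 f) e₂) ∧
    -- Jacobi identity (Leibniz form)
    (∀ e₁ e₂ e₃ : E, islin e₁.2.1 → islin e₂.2.1 → islin e₃.2.1 →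
        br e₁ (br e₂ e₃) = br (br e₁ e₂) e₃ + br e₂ (br e₁ e₃)) ∧
    -- invariance of the pairing
    (∀ e₁ e₂ e₃ : E, islin e₁.2.1 → islin e₂.2.1 → islin e₃.2.1 →
        act (anc e₁) (P e₂ e₃) = P (br e₁ e₂) e₃ + P e₂ (br e₁ e₃)) ∧
    -- anchor compatibility
    (∀ e₁ e₂ : E, anc (br e₁ e₂) = ⁅anc e₁, anc e₂⁆) ∧
    -- symmetrization:  ⟦e₁,e₂⟧ + ⟦e₂,e₁⟧ = 𝒟⟨e₁,e₂⟩
    (∀ e₁ e₂ : E, islin e₁.2.1 → islin e₂.2.1 →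
        br e₁ e₂ + br e₂ e₁ = Dop (P e₁ e₂)) ∧
    -- nondegeneracy of the pairing
    (∀ e : E, islin e.2.1 → (∀ e' : E, P e e' = 0) → e = 0) := by

  intro E anc P br smulE Dop islin
  -- ## derived helper facts
  have hact0 : ∀ X : V, act X (0:R) = 0 := by
    intro X; have h := hactadd' X 0 0; rw [add_zero] at h; linear_combination -h
  have hactsub : ∀ (X : V) (f g : R), act X (f - g) = act X f - act X g := by
    intro X f g; have h := hactadd' X (f - g) g
    rw [show f - g + g = f by ring] at h; linear_combination -h
  have hlin0 : ∀ α : V → R, islin α → α 0 = 0 := by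
    intro α hα; simpa using hα.2 0 0
  have hlinneg : ∀ α : V → R, islin α → ∀ X, α (-X) = -α X := by
    intro α hα X; have h := hα.2 (-1) X; rw [neg_one_smul] at h; linear_combination h
  have hlinsub : ∀ α : V → R, islin α → ∀ X Y, α (X - Y) = α X - α Y := by
    intro α hα X Y; have h := hα.1 (X - Y) Y
    rw [show X - Y + Y = X by abel] at h; linear_combination -h
  have hLK0 : ∀ X : V, LK X (0:K) = 0 := by
    intro X; have h := hLKadd X 0 0; rw [add_zero] at h
    have h2 := sub_eq_of_eq_add h; rwa [sub_self, eq_comm] at h2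
  have hLKsub : ∀ (X : V) (w w' : K), LK X (w - w') = LK X w - LK X w' := by
    intro X w w'; have h := hLKadd X (w - w') w'
    rw [show w - w' + w' = w by abel] at h; rw [h]; abel
  have hPK0 : ∀ w : K, PK w 0 = 0 := by
    intro w; have h := hPKadd w 0 0; rw [add_zero] at h; linear_combination -h
  have hPKsub : ∀ (w a b : K), PK w (a - b) = PK w a - PK w b := by
    intro w a b; have h := hPKadd w (a - b) b
    rw [show a - b + b = a by abel] at h; linear_combination -h
  have hPKaddl : ∀ (a b c : K), PK (a + b) c = PK a c + PK b c := by
    intro a b c; rw [hPKsymm, hPKadd, hPKsymm c a, hPKsymm c b]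
  have hPKsubl : ∀ (a b c : K), PK (a - b) c = PK a c - PK b c := by
    intro a b c; rw [hPKsymm, hPKsub, hPKsymm c a, hPKsymm c b]
  have hPKnegl : ∀ (a b : K), PK (-a) b = -PK a b := by
    intro a b; have h := hPKsmul (-1) a b; rw [neg_one_smul] at h; linear_combination h
  have hPKsmul' : ∀ (f : R) (a b : K), PK a (f • b) = f * PK a b := by
    intro f a b; rw [hPKsymm, hPKsmul, hPKsymm b a]
  have hPKinv2 : ∀ a b c : K, PK a ⁅b, c⁆ = PK ⁅a, b⁆ c := by
    intro a b c
    have h := hPKinv b a c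
    have h2 : ⁅b, a⁆ = -⁅a, b⁆ := (lie_skew b a).symm
    rw [h2, hPKnegl] at h; linear_combination h
  have hswap : ∀ A B C : V, η A B C = η C A B := by
    intro A B C; rw [hηalt2, hηalt1, neg_neg]
  have hVsm : ∀ (f : R) (A B : V), ⁅f • A, B⁆ = f • ⁅A, B⁆ - act B f • A := by
    intro f A B
    rw [← lie_skew, hVmod, ← lie_skew A B]
    module
  have hKsm : ∀ (f : R) (a b : K), ⁅a, f • b⁆ = f • ⁅a, b⁆ := by
    intro f a b
    rw [← lie_skew, hKbr, ← lie_skew b a]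
    module
  have hηsm2 : ∀ (f : R) (A B C : V), η A (f • B) C = f * η A B C := by
    intro f A B C
    rw [hηalt1, hηsmul, hηalt1 B A C]; ring
  refine ⟨?_, ?_, ?_, ?_, ?_, ?_⟩
  · -- Leibniz rule
    rintro f ⟨X₁, α₁, w₁⟩ ⟨X₂, α₂, w₂⟩ h₁ h₂
    replace h₁ : islin α₁ := h₁
    replace h₂ : islin α₂ := h₂
    refine Prod.ext ?_ (Prod.ext ?_ ?_)
    · simp only [E, br, smulE, Prod.fst_add]
      exact hVmod X₁ f X₂
    · funext Z
      simp only [E, br, smulE, Prod.fst_add, Prod.snd_add, Pi.add_apply]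
      simp only [hVsm, hVmod, hlinsub α₁ h₁, h₁.1, h₁.2, hactsmul, hactLeib,
        hηsm2, hPKsmul']
      ring
    · simp only [E, br, smulE, Prod.fst_add, Prod.snd_add]
      rw [hLKf, hLKten, hKsm]
      rw [smul_add, smul_sub]; abel
  · -- Jacobi
    rintro ⟨X₁, α₁, w₁⟩ ⟨X₂, α₂, w₂⟩ ⟨X₃, α₃, w₃⟩ h₁ h₂ h₃
    replace h₁ : islin α₁ := h₁
    replace h₂ : islin α₂ := h₂
    replace h₃ : islin α₃ := h₃
    refine Prod.ext ?_ (Prod.ext ?_ ?_)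
    · simp only [E, br, Prod.fst_add]
      exact leibniz_lie X₁ X₂ X₃
    · funext Z
      simp only [E, br, Prod.fst_add, Prod.snd_add, Pi.add_apply]
      simp only [hactadd', hactsub, hactbr, hPKL, hLKadd, hLKsub, hLKcomm, hLKbr,
        lie_lie, hPKadd, hPKsub, hPKaddl, hPKsubl, hPKinv2,
        h₁.1, h₂.1, h₃.1, hlinsub α₁ h₁, hlinsub α₂ h₂, hlinsub α₃ h₃]
      have a6 : PK ⁅w₁, LK Z w₂⁆ w₃ = -PK ⁅LK Z w₂, w₁⁆ w₃ := by
        rw [show ⁅w₁, LK Z w₂⁆ = -⁅LK Z w₂, w₁⁆ from (lie_skew w₁ (LK Z w₂)).symm, hPKnegl]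
      linear_combination hηclosed X₁ X₂ X₃ Z - hswap X₂ X₃ ⁅X₁, Z⁆ +
        hηalt1 X₁ ⁅X₂, X₃⁆ Z - hswap X₁ X₂ ⁅X₃, Z⁆ + hswap X₁ X₃ ⁅X₂, Z⁆ -
        hηalt1 X₂ ⁅X₁, X₃⁆ Z + hPKsymm (LK Z w₂) (LK X₃ w₁) - a6
    · simp only [E, br, Prod.fst_add, Prod.snd_add]
      simp only [hLKadd, hLKsub, hLKcomm, hLKbr, lie_lie, lie_add, add_lie, lie_sub, sub_lie]
      rw [show ⁅w₂, LK X₃ w₁⁆ = -⁅LK X₃ w₁, w₂⁆ from (lie_skew w₂ (LK X₃ w₁)).symm]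
      abel
  · -- invariance
    rintro ⟨X₁, α₁, w₁⟩ ⟨X₂, α₂, w₂⟩ ⟨X₃, α₃, w₃⟩ h₁ h₂ h₃
    replace h₁ : islin α₁ := h₁
    replace h₂ : islin α₂ := h₂
    replace h₃ : islin α₃ := h₃
    simp only [E, br, anc, P, Prod.fst_add, Prod.snd_add, Pi.add_apply]
    simp only [hactadd', hactsub, hPKL, hLKadd, hLKsub, hPKadd, hPKsub,
      hPKaddl, hPKsubl, hPKinv2]
    have e1 : α₁ ⁅X₃, X₂⁆ = -α₁ ⁅X₂, X₃⁆ := by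
      rw [show ⁅X₃, X₂⁆ = -⁅X₂, X₃⁆ from (lie_skew X₃ X₂).symm, hlinneg α₁ h₁]
    have e4 : PK ⁅w₂, w₁⁆ w₃ = -PK ⁅w₁, w₂⁆ w₃ := by
      rw [show ⁅w₂, w₁⁆ = -⁅w₁, w₂⁆ from (lie_skew w₂ w₁).symm, hPKnegl]
    linear_combination -e1 - hηalt2 X₁ X₂ X₃ + hPKsymm w₂ (LK X₃ w₁) - e4
  · -- anchor
    rintro ⟨X₁, α₁, w₁⟩ ⟨X₂, α₂, w₂⟩
    rfl
  · -- symmetrization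
    rintro ⟨X₁, α₁, w₁⟩ ⟨X₂, α₂, w₂⟩ h₁ h₂
    replace h₁ : islin α₁ := h₁
    replace h₂ : islin α₂ := h₂
    refine Prod.ext ?_ (Prod.ext ?_ ?_)
    · simp only [E, br, Dop, Prod.fst_add]
      rw [show ⁅X₂, X₁⁆ = -⁅X₁, X₂⁆ from (lie_skew X₂ X₁).symm]; abel
    · funext Z
      simp only [E, br, Dop, P, Prod.fst_add, Prod.snd_add, Pi.add_apply]
      simp only [hactadd', hPKL]
      linear_combination hηalt1 X₁ X₂ Z + hPKsymm w₂ (LK Z w₁) + hPKsymm (LK Z w₂) w₁ + hPKsymm (LK Z w₁) w₂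
    · simp only [E, br, Dop, Prod.fst_add, Prod.snd_add]
      rw [show ⁅w₂, w₁⁆ = -⁅w₁, w₂⁆ from (lie_skew w₂ w₁).symm]; abel
  · -- nondegeneracy
    rintro ⟨X, α, w⟩ hα h
    have h1 := h (0, fun _ => 1, 0)
    simp only [P] at h1
    rw [hlin0 α hα, hPK0] at h1
    exact absurd (by linear_combination h1 : (1:R) = 0) one_ne_zero
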